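/- arXiv:1207.4018 — 4 statements merged into one kernel-verified Lean document; each statement's English description precedes it below -/
import Mathlib

section
/- Let F(r) = (1+r)·log(1+r) + (1−r)·log(1−r) − λ·r^2 on (−1,1) with λ ≥ 1. Then F'(s)·s ≥ F(s) − C_F for all s ∈ (−1,1), for some constant C_F > 0 depending only on λ. -/
/-- The logarithmic (singular) potential with parameter `lam`. -/
noncomputable def logPotential (lam : ℝ) : ℝ → ℝ :=
  fun r => (1 + r) * Real.log (1 + r) + (1 - r) * Real.log (1 - r) - lam * r ^ 2

/-- Its derivative `F'(s) = log(1+s) - log(1-s) - 2λs`. -/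
noncomputable def logPotential' (lam : ℝ) : ℝ → ℝ :=
  fun s => Real.log (1 + s) - Real.log (1 - s) - 2 * lam * s

/-- for the logarithmic potential with `λ ≥ 1` there exists `C_F > 0`
(depending only on `λ`) such that `F'(s)·s ≥ F(s) - C_F` for all `s ∈ (-1,1)`. -/
theorem logPotential_deriv_mul_ge :
    ∀ lam : ℝ, 1 ≤ lam → ∃ C_F : ℝ, 0 < C_F ∧
      ∀ s ∈ Set.Ioo (-1 : ℝ) 1, logPotential lam s - C_F ≤ logPotential' lam s * s := by
  intro lam hlam
  refine ⟨lam, lt_of_lt_of_le one_pos hlam, ?_⟩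
  rintro s ⟨hs1, hs2⟩
  have h1 : (0:ℝ) < 1 + s := by linarith
  have h2 : (0:ℝ) < 1 - s := by linarith
  have hlog : Real.log (1 + s) + Real.log (1 - s) ≤ 0 := by
    rw [← Real.log_mul (ne_of_gt h1) (ne_of_gt h2)]
    apply Real.log_nonpos (by nlinarith) (by nlinarith [sq_nonneg s])
  have hs : s ^ 2 ≤ 1 := by nlinarith
  have hsq : lam * s ^ 2 ≤ lam := by nlinarith
  simp only [logPotential, logPotential']
  nlinarith [hlog, hsq]
end

section
/- Let (x_k)_{k≥0} be a sequence of nonnegative real numbers and suppose there exist constants C ≥ 1, σ > 0, M ≥ 1 such that x_k ≤ C·(2^k)^σ·x_{k−1}^2 for all k ≥ 1 and x_0 ≤ M. Then x_k^{1/2^k} ≤ C^{A_k/2^k}·2^{σ B_k/2^k}·M where A_k = ∑_{i=0}^{k−1} 2^i and B_k = ∑_{i=0}^{k−1} 2^i·(k−i); consequently limsup_{k→∞} x_k^{1/2^k} ≤ C^2·2^{2σ}·M. -/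
open Finset Filter

lemma sumA' (k : ℕ) : ∑ i ∈ Finset.range k, (2 : ℝ) ^ i = 2 ^ k - 1 := by
  induction k with
  | zero => simp
  | succ k ih => rw [Finset.sum_range_succ, ih]; ring

lemma sumB' (k : ℕ) :
    ∑ i ∈ Finset.range k, (2 : ℝ) ^ i * ((k - i : ℕ) : ℝ) = 2 ^ (k + 1) - (k + 2) := by
  induction k with
  | zero => simp
  | succ k ih =>
    have step : ∀ i ∈ Finset.range (k + 1),
        (2 : ℝ) ^ i * ((k + 1 - i : ℕ) : ℝ) =
          (2 : ℝ) ^ i * ((k - i : ℕ) : ℝ) + (2 : ℝ) ^ i := by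
      intro i hi
      have hik : i ≤ k := Nat.lt_succ_iff.mp (Finset.mem_range.mp hi)
      have : (k + 1 - i : ℕ) = (k - i : ℕ) + 1 := by omega
      rw [this]; push_cast; ring
    rw [Finset.sum_congr rfl step, Finset.sum_add_distrib, Finset.sum_range_succ, sumA', ih]
    simp
    push_cast
    ring

/-- abstract Alikakos–Moser iteration. If `x_k ≥ 0`, `x_0 ≤ M`, and
`x_k ≤ C (2^k)^σ x_{k-1}²` for `k ≥ 1` (with `C ≥ 1`, `σ > 0`, `M ≥ 1`), then
`x_k^{1/2^k} ≤ C^{A_k/2^k} 2^{σ B_k/2^k} M` where `A_k = ∑_{i<k} 2^i`,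
`B_k = ∑_{i<k} 2^i (k-i)`; consequently
`limsup_k x_k^{1/2^k} ≤ C² 2^{2σ} M`. -/
theorem alikakos_moser_iteration
    (x : ℕ → ℝ) (C σ M : ℝ) (hx : ∀ k, 0 ≤ x k) (hC : 1 ≤ C) (hσ : 0 < σ) (hM : 1 ≤ M)
    (h0 : x 0 ≤ M)
    (hrec : ∀ k : ℕ, 1 ≤ k → x k ≤ C * ((2 : ℝ) ^ k) ^ σ * x (k - 1) ^ 2) :
    (∀ k : ℕ,
      x k ^ ((1 : ℝ) / 2 ^ k) ≤
        C ^ ((∑ i ∈ Finset.range k, (2 : ℝ) ^ i) / 2 ^ k) *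
          (2 : ℝ) ^ (σ * (∑ i ∈ Finset.range k, (2 : ℝ) ^ i * ((k - i : ℕ) : ℝ)) / 2 ^ k) *
          M) ∧
    Filter.limsup (fun k : ℕ => x k ^ ((1 : ℝ) / 2 ^ k)) Filter.atTop ≤
      C ^ (2 : ℝ) * (2 : ℝ) ^ (2 * σ) * M := by
  have hC0 : (0 : ℝ) < C := lt_of_lt_of_le one_pos hC
  have hM0 : (0 : ℝ) < M := lt_of_lt_of_le one_pos hM
  have h20 : (0 : ℝ) < 2 := by norm_num
  have sq_rpow : ∀ (y p : ℝ), 0 < y → (y ^ p) ^ 2 = y ^ (2 * p) := by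
    intro y p hy
    rw [sq, ← Real.rpow_add hy]; ring_nf
  have key : ∀ k : ℕ, x k ≤
      C ^ ((2 : ℝ) ^ k - 1) * (2 : ℝ) ^ (σ * ((2 : ℝ) ^ (k + 1) - (k + 2))) *
        M ^ ((2 : ℝ) ^ k) := by
    intro k
    induction k with
    | zero => norm_num [Real.rpow_one]; exact h0
    | succ k ih =>
      have h1 := hrec (k + 1) (by omega)
      simp only [Nat.add_sub_cancel] at h1
      have h2 : x k ^ 2 ≤
          (C ^ ((2 : ℝ) ^ k - 1) * (2 : ℝ) ^ (σ * ((2 : ℝ) ^ (k + 1) - (k + 2))) *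
            M ^ ((2 : ℝ) ^ k)) ^ 2 := by
        apply pow_le_pow_left₀ (hx k) ih
      have h3 : x (k + 1) ≤ C * ((2 : ℝ) ^ (k + 1)) ^ σ *
          (C ^ ((2 : ℝ) ^ k - 1) * (2 : ℝ) ^ (σ * ((2 : ℝ) ^ (k + 1) - (k + 2))) *
            M ^ ((2 : ℝ) ^ k)) ^ 2 := by
        refine h1.trans ?_
        apply mul_le_mul_of_nonneg_left h2
        positivity
      refine h3.trans_eq ?_
      have e1 : ((2 : ℝ) ^ (k + 1)) ^ σ = (2 : ℝ) ^ (((k : ℝ) + 1) * σ) := by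
        rw [← Real.rpow_natCast 2 (k + 1), ← Real.rpow_mul (by norm_num)]
        push_cast ; ring_nf
      rw [e1, mul_pow, mul_pow, sq_rpow _ _ hC0, sq_rpow _ _ h20, sq_rpow _ _ hM0]
      rw [show C * (2:ℝ) ^ (((k : ℝ) + 1) * σ) *
            (C ^ (2 * ((2:ℝ) ^ k - 1)) * (2:ℝ) ^ (2 * (σ * ((2:ℝ) ^ (k+1) - (k+2)))) *
              M ^ (2 * (2:ℝ) ^ k)) =
          (C ^ (1:ℝ) * C ^ (2 * ((2:ℝ) ^ k - 1))) *
            ((2:ℝ) ^ (((k : ℝ) + 1) * σ) * (2:ℝ) ^ (2 * (σ * ((2:ℝ) ^ (k+1) - (k+2))))) *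
            M ^ (2 * (2:ℝ) ^ k) by rw [Real.rpow_one]; ring]
      rw [← Real.rpow_add hC0, ← Real.rpow_add h20]
      congr 2
      · ring_nf
      · push_cast ; ring_nf
      · ring_nf
  have part1 : ∀ k : ℕ,
      x k ^ ((1 : ℝ) / 2 ^ k) ≤
        C ^ ((∑ i ∈ Finset.range k, (2 : ℝ) ^ i) / 2 ^ k) *
          (2 : ℝ) ^ (σ * (∑ i ∈ Finset.range k, (2 : ℝ) ^ i * ((k - i : ℕ) : ℝ)) / 2 ^ k) *
          M := by
    intro k
    have ht : (0 : ℝ) < (1 : ℝ) / 2 ^ k := by positivity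
    have h4 : x k ^ ((1 : ℝ) / 2 ^ k) ≤
        (C ^ ((2 : ℝ) ^ k - 1) * (2 : ℝ) ^ (σ * ((2 : ℝ) ^ (k + 1) - (k + 2))) *
          M ^ ((2 : ℝ) ^ k)) ^ ((1 : ℝ) / 2 ^ k) :=
      Real.rpow_le_rpow (hx k) (key k) ht.le
    refine h4.trans_eq ?_
    rw [Real.mul_rpow (by positivity) (by positivity),
        Real.mul_rpow (by positivity) (by positivity),
        ← Real.rpow_natCast 2 k,
        ← Real.rpow_mul hC0.le, ← Real.rpow_mul h20.le, ← Real.rpow_mul hM0.le,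
        sumA', sumB']
    rw [Real.rpow_natCast]
    have hMe : (2 : ℝ) ^ k * ((1 : ℝ) / 2 ^ k) = 1 := by
      field_simp
    rw [hMe, Real.rpow_one, mul_one_div, mul_one_div]
  refine ⟨part1, ?_⟩
  have bound : ∀ k : ℕ, x k ^ ((1 : ℝ) / 2 ^ k) ≤ C ^ (2 : ℝ) * (2 : ℝ) ^ (2 * σ) * M := by
    intro k
    refine (part1 k).trans ?_
    have h2k : (0 : ℝ) < 2 ^ k := by positivity
    have eA : (∑ i ∈ Finset.range k, (2 : ℝ) ^ i) / 2 ^ k ≤ 2 := by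
      rw [sumA', div_le_iff₀ h2k]; nlinarith
    have eB : σ * (∑ i ∈ Finset.range k, (2 : ℝ) ^ i * ((k - i : ℕ) : ℝ)) / 2 ^ k ≤ 2 * σ := by
      rw [sumB', div_le_iff₀ h2k]
      have hk0 : (0 : ℝ) ≤ (k : ℝ) := Nat.cast_nonneg k
      have : (2 : ℝ) ^ (k + 1) - ((k : ℝ) + 2) ≤ 2 * 2 ^ k := by
        rw [pow_succ]; nlinarith
      nlinarith
    have b1 : C ^ ((∑ i ∈ Finset.range k, (2 : ℝ) ^ i) / 2 ^ k) ≤ C ^ (2 : ℝ) :=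
      Real.rpow_le_rpow_of_exponent_le hC eA
    have b2 : (2 : ℝ) ^ (σ * (∑ i ∈ Finset.range k, (2 : ℝ) ^ i * ((k - i : ℕ) : ℝ)) / 2 ^ k) ≤
        (2 : ℝ) ^ (2 * σ) :=
      Real.rpow_le_rpow_of_exponent_le (by norm_num) eB
    have hb2pos : (0 : ℝ) ≤ (2 : ℝ) ^ (σ * (∑ i ∈ Finset.range k, (2 : ℝ) ^ i * ((k - i : ℕ) : ℝ)) / 2 ^ k) := by positivity
    have := mul_le_mul b1 b2 hb2pos (by positivity)
    exact mul_le_mul_of_nonneg_right this hM0.le |>.trans_eq rfl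
  exact Filter.limsup_le_of_le
    (Filter.isCoboundedUnder_le_of_le Filter.atTop fun k => Real.rpow_nonneg (hx k) _)
    (Filter.Eventually.of_forall bound)
end

section
/- Suppose f : [0, ∞) → [0, ∞) is measurable with f ∈ L^2(0, ∞) and there exist constants C > 0 and θ ∈ (0, 1/2] such that ∫_t^∞ f(s)^2 ds ≤ C·f(t)^{1/(1−θ)} for almost every t in a measurable set M ⊆ (0,∞). Then f ∈ L^1(M), i.e. ∫_M f(s) ds < ∞. -/
open MeasureTheory
open scoped ENNReal

/-- Key tail bound: if the tail lintegrals past every point of `S` are `≤ c`,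
then the lintegral over `S` itself is `≤ c`. -/
lemma key_tail_bound (g : ℝ → ℝ≥0∞) (S : Set ℝ) (hS0 : S ⊆ Set.Ioi 0)
    (htot : (∫⁻ s in Set.Ioi (0:ℝ), g s) ≠ ⊤)
    (c : ℝ≥0∞) (h : ∀ t ∈ S, (∫⁻ s in Set.Ioi t, g s) ≤ c) :
    (∫⁻ s in S, g s) ≤ c := by
  rcases S.eq_empty_or_nonempty with rfl | hne
  · simp
  have hbdd : BddBelow S := ⟨0, fun x hx => le_of_lt (hS0 hx)⟩
  set τ := sInf S with hτ
  have hτ0 : 0 ≤ τ := le_csInf hne fun x hx => (hS0 hx).le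
  set ν := volume.withDensity g with hν
  have hν_apply : ∀ (A : Set ℝ), MeasurableSet A → ν A = ∫⁻ s in A, g s :=
    fun A hA => withDensity_apply g hA
  have hνIoi : ∀ t : ℝ, ν (Set.Ioi t) = ∫⁻ s in Set.Ioi t, g s :=
    fun t => hν_apply _ measurableSet_Ioi
  have hν0 : ν (Set.Ioi (0:ℝ)) ≠ ⊤ := by rw [hνIoi]; exact htot
  have hsing : ∀ x : ℝ, ν {x} = 0 := fun x =>
    (withDensity_absolutelyContinuous volume g) (measure_singleton x)
  -- the shrinking intervals
  set I : ℕ → Set ℝ := fun k => Set.Icc τ (τ + 1/((k:ℝ)+1)) with hI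
  have hanti : Antitone I := by
    intro a b hab
    apply Set.Icc_subset_Icc le_rfl
    have : 1/((b:ℝ)+1) ≤ 1/((a:ℝ)+1) := by
      apply one_div_le_one_div_of_le (by positivity)
      exact_mod_cast by omega
    linarith
  have hIfin : ν (I 0) ≠ ⊤ := by
    have hsub : I 0 ⊆ {0} ∪ Set.Ioi 0 := by
      intro x hx
      rcases eq_or_lt_of_le (hτ0.trans hx.1) with h0 | h0
      · exact Or.inl (by simp [← h0])
      · exact Or.inr h0
    refine ne_top_of_le_ne_top ?_ (measure_mono hsub)
    refine ne_top_of_le_ne_top ?_ (measure_union_le _ _)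
    simp [hsing, hν0, lt_top_iff_ne_top]
  have hinter : (⋂ k : ℕ, I k) = {τ} := by
    apply Set.eq_singleton_iff_unique_mem.mpr
    constructor
    · refine Set.mem_iInter.mpr fun k => ⟨le_rfl, ?_⟩
      have : 0 < 1/((k:ℝ)+1) := by positivity
      linarith
    · intro x hx
      rw [Set.mem_iInter] at hx
      have h1 : τ ≤ x := (hx 0).1
      have h2 : x ≤ τ := by
        have hten : Filter.Tendsto (fun k : ℕ => τ + 1/((k:ℝ)+1)) Filter.atTop (nhds (τ + 0)) :=
          Filter.Tendsto.const_add τ tendsto_one_div_add_atTop_nhds_zero_nat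
        rw [add_zero] at hten
        exact ge_of_tendsto hten (Filter.Eventually.of_forall fun k => (hx k).2)
      linarith
  have htend : Filter.Tendsto (fun k : ℕ => ν (I k)) Filter.atTop (nhds 0) := by
    have := tendsto_measure_iInter_atTop (μ := ν) (s := I)
      (fun k => (measurableSet_Icc).nullMeasurableSet) hanti ⟨0, hIfin⟩
    rw [hinter, hsing] at this
    exact this
  have hk : ∀ k : ℕ, (∫⁻ s in S, g s) ≤ c + ν (I k) := by
    intro k
    have hkpos : (0:ℝ) < 1/((k:ℝ)+1) := by positivity
    obtain ⟨t, htS, htlt⟩ := Real.lt_sInf_add_pos hne hkpos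
    have hsub : S ⊆ (Set.Ioi t) ∪ I k := by
      intro x hx
      rcases lt_or_ge t x with hlt | hle
      · exact Or.inl hlt
      · exact Or.inr ⟨csInf_le hbdd hx, le_of_lt (lt_of_le_of_lt hle htlt)⟩
    calc (∫⁻ s in S, g s) ≤ ∫⁻ s in (Set.Ioi t) ∪ I k, g s := lintegral_mono_set hsub
      _ ≤ (∫⁻ s in Set.Ioi t, g s) + ∫⁻ s in I k, g s := lintegral_union_le _ _ _
      _ ≤ c + ν (I k) := by
          refine add_le_add (h t htS) (le_of_eq ?_)
          rw [hν_apply _ measurableSet_Icc]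
  have hlim : Filter.Tendsto (fun k : ℕ => c + ν (I k)) Filter.atTop (nhds (c + 0)) :=
    Filter.Tendsto.const_add c htend
  rw [add_zero] at hlim
  exact ge_of_tendsto' hlim hk

/-- abstract integrability lemma. If `f ≥ 0` is measurable with
`f ∈ L²(0,∞)` and `∫_t^∞ f(s)² ds ≤ C f(t)^{1/(1-θ)}` for a.e. `t` in a measurable
set `M ⊆ (0,∞)`, where `C > 0` and `θ ∈ (0, 1/2]`, then `f ∈ L¹(M)`. -/
theorem integrability_from_lojasiewicz_decay
    (f : ℝ → ℝ) (hf_meas : Measurable f) (hf_nonneg : ∀ t, 0 ≤ f t)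
    (hf_L2 : IntegrableOn (fun s => f s ^ 2) (Set.Ioi 0))
    (M : Set ℝ) (hM : MeasurableSet M) (hMsub : M ⊆ Set.Ioi 0)
    (C θ : ℝ) (hC : 0 < C) (hθ : θ ∈ Set.Ioc (0 : ℝ) (1 / 2))
    (hdecay : ∀ᵐ t ∂volume.restrict M,
      (∫ s in Set.Ioi t, f s ^ 2) ≤ C * f t ^ ((1 : ℝ) / (1 - θ))) :
    IntegrableOn f M := by
  obtain ⟨hθ0, hθ2⟩ := hθ
  have h1θ : 0 < 1 - θ := by linarith
  set p : ℝ := 1 / (1 - θ) with hp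
  have hp1 : 1 < p := one_lt_one_div h1θ (by linarith)
  have hp0 : 0 < p := lt_trans one_pos hp1
  set g : ℝ → ℝ≥0∞ := fun s => ENNReal.ofReal (f s ^ 2) with hg
  have hgmeas : Measurable g := (hf_meas.pow_const 2).ennreal_ofReal
  set Z : ℝ → ℝ≥0∞ := fun t => ∫⁻ s in Set.Ioi t, g s with hZdef
  have hZanti : Antitone Z := fun a b hab => lintegral_mono_set (Set.Ioi_subset_Ioi hab)
  have hZmeas : Measurable Z := hZanti.measurable
  have hZ0 : Z 0 ≠ ⊤ := by
    have h2 := hf_L2.2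
    rw [hasFiniteIntegral_iff_norm] at h2
    have : Z 0 = ∫⁻ s in Set.Ioi (0:ℝ), ENNReal.ofReal ‖f s ^ 2‖ := by
      apply lintegral_congr
      intro s
      rw [Real.norm_of_nonneg (sq_nonneg _)]
    rw [this]
    exact h2.ne
  have hZfin : ∀ t : ℝ, 0 < t → Z t ≠ ⊤ := fun t ht =>
    ne_top_of_le_ne_top hZ0 (hZanti ht.le)
  have hrel : ∀ t : ℝ, (∫ s in Set.Ioi t, f s ^ 2) = (Z t).toReal := fun t =>
    integral_eq_lintegral_of_nonneg_ae (Filter.Eventually.of_forall fun s => sq_nonneg _)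
      ((hf_meas.pow_const 2).aestronglyMeasurable)
  -- the good set
  set G : Set ℝ := {t ∈ M | (Z t).toReal ≤ C * f t ^ p} with hGdef
  have hGmeas : MeasurableSet G :=
    hM.inter (measurableSet_le hZmeas.ennreal_toReal
      (((Real.continuous_rpow_const hp0.le).measurable.comp hf_meas).const_mul C))
  have hGM : G ⊆ M := fun t ht => ht.1
  have hGnull : volume (M \ G) = 0 := by
    have hdecay' : ∀ᵐ t ∂volume.restrict M, (Z t).toReal ≤ C * f t ^ p := by
      filter_upwards [hdecay] with t ht
      rw [← hrel t]
      exact ht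
    have hae := (ae_restrict_iff' hM).mp hdecay'
    refine measure_mono_null ?_ (ae_iff.mp hae)
    intro x hx
    simp only [Set.mem_setOf_eq, Classical.not_imp]
    exact ⟨hx.1, fun hle => hx.2 ⟨hx.1, hle⟩⟩
  -- dyadic decomposition
  set half : ℝ := 1/2 with hhalf
  have hhalfpos : (0:ℝ) < half := by norm_num
  have hhalflt : half < 1 := by norm_num
  set ρ : ℝ := half ^ (p - 1) with hρ
  have hρpos : 0 < ρ := Real.rpow_pos_of_pos hhalfpos _
  have hρlt : ρ < 1 := Real.rpow_lt_one hhalfpos.le hhalflt (by linarith)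
  set B : Set ℝ := {t ∈ G | 1 < f t} with hB
  set A : ℕ → Set ℝ := fun n => {t ∈ G | half ^ (n+1) < f t ∧ f t ≤ half ^ n} with hA
  have hAmeas : ∀ n, MeasurableSet (A n) := fun n =>
    hGmeas.inter ((measurableSet_lt measurable_const hf_meas).inter
      (measurableSet_le hf_meas measurable_const))
  have hAG : ∀ n, A n ⊆ G := fun n t ht => ht.1
  -- the covering
  have hcover : G ⊆ {t | f t = 0} ∪ (B ∪ ⋃ n, A n) := by
    intro t ht
    rcases eq_or_lt_of_le (hf_nonneg t) with h0 | h0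
    · exact Or.inl h0.symm
    rcases lt_or_ge 1 (f t) with h1 | h1
    · exact Or.inr (Or.inl ⟨ht, h1⟩)
    · refine Or.inr (Or.inr ?_)
      have hex : ∃ m : ℕ, half ^ (m+1) < f t := by
        obtain ⟨m, hm⟩ := exists_pow_lt_of_lt_one h0 hhalflt
        exact ⟨m, lt_of_le_of_lt (pow_le_pow_of_le_one hhalfpos.le hhalflt.le
          (Nat.le_succ m)) hm⟩
      set n := Nat.find hex with hn
      have hfind := Nat.find_spec hex
      refine Set.mem_iUnion.mpr ⟨n, ht, hfind, ?_⟩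
      rcases Nat.eq_zero_or_pos n with h | h
      · rw [h, pow_zero]; exact h1
      · have h2 := Nat.find_min hex (m := n - 1) (by omega)
        push_neg at h2
        rwa [Nat.sub_add_cancel h] at h2
  -- bound on B : f ≤ f² there
  have hBbound : (∫⁻ t in B, ENNReal.ofReal (f t)) ≤ Z 0 := by
    have h1 : (∫⁻ t in B, ENNReal.ofReal (f t)) ≤ ∫⁻ t in B, g t := by
      apply setLIntegral_mono hgmeas
      intro t ht
      apply ENNReal.ofReal_le_ofReal
      nlinarith [ht.2, hf_nonneg t]
    refine h1.trans (lintegral_mono_set ?_)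
    exact fun t ht => hMsub (hGM ht.1)
  -- bound on A n
  have hAbound : ∀ n : ℕ, (∫⁻ t in A n, ENNReal.ofReal (f t)) ≤
      ENNReal.ofReal (4*C) * (ENNReal.ofReal ρ) ^ n := by
    intro n
    have hhn : (0:ℝ) < half ^ n := pow_pos hhalfpos n
    have hhn1 : (0:ℝ) < (half ^ (n+1))^2 := by positivity
    set cn : ℝ := C * (half ^ n) ^ p with hcn
    have hcnpos : 0 < cn := mul_pos hC (Real.rpow_pos_of_pos hhn p)
    -- tail bound for points of A n
    have hAZ : ∀ t ∈ A n, Z t ≤ ENNReal.ofReal cn := by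
      intro t ht
      have htpos : (0:ℝ) < t := hMsub (hGM (hAG n ht))
      rw [ENNReal.le_ofReal_iff_toReal_le (hZfin t htpos) hcnpos.le]
      refine le_trans ht.1.2 ?_
      apply mul_le_mul_of_nonneg_left _ hC.le
      exact Real.rpow_le_rpow (hf_nonneg t) ht.2.2 hp0.le
    have hA1 : (∫⁻ s in A n, g s) ≤ ENNReal.ofReal cn := by
      apply key_tail_bound g (A n) (fun t ht => hMsub (hGM (hAG n ht))) hZ0
      exact hAZ
    -- lower bound on ∫ g over A n
    have hA2 : ENNReal.ofReal ((half ^ (n+1))^2) * volume (A n) ≤ ∫⁻ s in A n, g s := by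
      rw [← setLIntegral_const]
      apply setLIntegral_mono hgmeas
      intro t ht
      apply ENNReal.ofReal_le_ofReal
      exact pow_le_pow_left₀ (by positivity) ht.2.1.le 2
    have hvol : volume (A n) ≤ ENNReal.ofReal cn / ENNReal.ofReal ((half ^ (n+1))^2) := by
      rw [ENNReal.le_div_iff_mul_le (Or.inl (ENNReal.ofReal_pos.mpr hhn1).ne')
        (Or.inl ENNReal.ofReal_ne_top)]
      calc volume (A n) * ENNReal.ofReal ((half ^ (n+1))^2)
          = ENNReal.ofReal ((half ^ (n+1))^2) * volume (A n) := mul_comm _ _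
        _ ≤ ∫⁻ s in A n, g s := hA2
        _ ≤ ENNReal.ofReal cn := hA1
    have hup : (∫⁻ t in A n, ENNReal.ofReal (f t)) ≤
        ENNReal.ofReal (half ^ n) * volume (A n) := by
      rw [← setLIntegral_const]
      apply setLIntegral_mono measurable_const
      intro t ht
      exact ENNReal.ofReal_le_ofReal ht.2.2
    -- the real-number computation
    have hkey : half ^ n * (cn / (half ^ (n+1))^2) = 4*C*ρ^n := by
      have e1 : ((half:ℝ) ^ n) ^ p = ρ ^ n * half ^ n := by
        rw [hρ, ← Real.rpow_natCast half n, ← Real.rpow_mul hhalfpos.le,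
          ← Real.rpow_natCast (half ^ (p-1)) n, ← Real.rpow_mul hhalfpos.le,
          ← Real.rpow_add hhalfpos]
        congr 1
        ring
      rw [hcn, e1]
      have hne : (half:ℝ) ^ n ≠ 0 := hhn.ne'
      field_simp
      ring
    calc (∫⁻ t in A n, ENNReal.ofReal (f t))
        ≤ ENNReal.ofReal (half ^ n) * volume (A n) := hup
      _ ≤ ENNReal.ofReal (half ^ n) * (ENNReal.ofReal cn / ENNReal.ofReal ((half ^ (n+1))^2)) :=
          mul_le_mul_right hvol _
      _ = ENNReal.ofReal (half ^ n) * ENNReal.ofReal (cn / (half ^ (n+1))^2) := by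
          rw [ENNReal.ofReal_div_of_pos hhn1]
      _ = ENNReal.ofReal (half ^ n * (cn / (half ^ (n+1))^2)) := by
          rw [← ENNReal.ofReal_mul hhn.le]
      _ = ENNReal.ofReal (4*C*ρ^n) := by rw [hkey]
      _ = ENNReal.ofReal (4*C) * (ENNReal.ofReal ρ) ^ n := by
          rw [ENNReal.ofReal_mul (by positivity), ENNReal.ofReal_pow hρpos.le]
  -- assemble
  have hzero : (∫⁻ t in {t : ℝ | f t = 0}, ENNReal.ofReal (f t)) = 0 := by
    have : (∫⁻ t in {t : ℝ | f t = 0}, ENNReal.ofReal (f t)) ≤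
        ∫⁻ t in {t : ℝ | f t = 0}, 0 := by
      apply setLIntegral_mono measurable_const
      intro t ht
      simp [Set.mem_setOf_eq.mp ht]
    simpa using this
  have hsum : (∑' n : ℕ, ∫⁻ t in A n, ENNReal.ofReal (f t)) ≠ ⊤ := by
    have h1 : (∑' n : ℕ, ∫⁻ t in A n, ENNReal.ofReal (f t)) ≤
        ∑' n : ℕ, ENNReal.ofReal (4*C) * (ENNReal.ofReal ρ) ^ n :=
      ENNReal.tsum_le_tsum hAbound
    have h2 : (∑' n : ℕ, ENNReal.ofReal (4*C) * (ENNReal.ofReal ρ) ^ n) =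
        ENNReal.ofReal (4*C) * (1 - ENNReal.ofReal ρ)⁻¹ := by
      rw [ENNReal.tsum_mul_left, ENNReal.tsum_geometric]
    refine ne_top_of_le_ne_top ?_ (h1.trans h2.le)
    apply ENNReal.mul_ne_top ENNReal.ofReal_ne_top
    rw [Ne, ENNReal.inv_eq_top, tsub_eq_zero_iff_le]
    exact not_le.mpr (ENNReal.ofReal_lt_one.mpr hρlt)
  have htotal : (∫⁻ t in M, ENNReal.ofReal (f t)) < ⊤ := by
    have hMsplit : M ⊆ (M \ G) ∪ G := by
      intro x hx
      by_cases hxG : x ∈ G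
      · exact Or.inr hxG
      · exact Or.inl ⟨hx, hxG⟩
    calc (∫⁻ t in M, ENNReal.ofReal (f t))
        ≤ ∫⁻ t in (M \ G) ∪ G, ENNReal.ofReal (f t) := lintegral_mono_set hMsplit
      _ ≤ (∫⁻ t in M \ G, ENNReal.ofReal (f t)) + ∫⁻ t in G, ENNReal.ofReal (f t) :=
          lintegral_union_le _ _ _
      _ = ∫⁻ t in G, ENNReal.ofReal (f t) := by
          rw [setLIntegral_measure_zero _ _ hGnull, zero_add]
      _ ≤ ∫⁻ t in {t : ℝ | f t = 0} ∪ (B ∪ ⋃ n, A n), ENNReal.ofReal (f t) :=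
          lintegral_mono_set hcover
      _ ≤ (∫⁻ t in {t : ℝ | f t = 0}, ENNReal.ofReal (f t)) +
          ∫⁻ t in B ∪ ⋃ n, A n, ENNReal.ofReal (f t) := lintegral_union_le _ _ _
      _ ≤ (∫⁻ t in {t : ℝ | f t = 0}, ENNReal.ofReal (f t)) +
          ((∫⁻ t in B, ENNReal.ofReal (f t)) + ∫⁻ t in ⋃ n, A n, ENNReal.ofReal (f t)) :=
          add_le_add_right (lintegral_union_le _ _ _) _
      _ ≤ 0 + (Z 0 + ∑' n : ℕ, ∫⁻ t in A n, ENNReal.ofReal (f t)) := by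
          rw [hzero]
          exact add_le_add_right (add_le_add hBbound (lintegral_iUnion_le _ _)) _
      _ < ⊤ := by
          rw [zero_add]
          exact ENNReal.add_lt_top.mpr ⟨lt_top_iff_ne_top.mpr hZ0, lt_top_iff_ne_top.mpr hsum⟩
  refine ⟨hf_meas.aestronglyMeasurable, ?_⟩
  rw [hasFiniteIntegral_iff_norm]
  have : (∫⁻ t in M, ENNReal.ofReal ‖f t‖) = ∫⁻ t in M, ENNReal.ofReal (f t) := by
    apply lintegral_congr
    intro t
    rw [Real.norm_of_nonneg (hf_nonneg t)]
  rwa [this]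
end

section
/- Let g : (−1, 1) → ℝ be continuous with g(s) → +∞ as s → 1⁻ and g(s) → −∞ as s → −1⁺, and let h : [τ, ∞) → ℝ be bounded with sup |h| ≤ R. Consider a C¹ solution y : [τ, ∞) → (−1, 1) of α·y'(t) + g(y(t)) = h(t) with α > 0. Then there exists δ ∈ (0, 1), depending only on g, R, α, and |y(τ)| ≤ 1 − δ̄ for some δ̄ > 0, such that |y(t)| ≤ 1 − δ for all t ≥ τ. -/
open Filter

/-- Barrier lemma: if `y τ ≤ c` and whenever `y t = c` (for `t ≥ τ`) the derivative
is strictly negative, then `y t ≤ c` for all `t ≥ τ`. -/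
lemma barrier_lemma (τ c : ℝ) (y y' : ℝ → ℝ)
    (hy : ∀ t, τ ≤ t → HasDerivAt y (y' t) t)
    (h0 : y τ ≤ c)
    (hd : ∀ t, τ ≤ t → y t = c → y' t < 0) :
    ∀ t, τ ≤ t → y t ≤ c := by
  intro t₀ ht₀
  by_contra hcon
  push_neg at hcon
  have hτt₀ : τ < t₀ := lt_of_le_of_ne ht₀ (by rintro rfl; exact absurd h0 (not_le.mpr hcon))
  set A : Set ℝ := Set.Icc τ t₀ ∩ y ⁻¹' Set.Iic c with hA
  have hcont : ContinuousOn y (Set.Icc τ t₀) := fun t ht =>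
    ((hy t ht.1).continuousAt).continuousWithinAt
  have hAclosed : IsClosed A :=
    hcont.preimage_isClosed_of_isClosed isClosed_Icc isClosed_Iic
  have hAne : A.Nonempty := ⟨τ, ⟨le_refl τ, le_of_lt hτt₀⟩, h0⟩
  have hAbdd : BddAbove A := ⟨t₀, fun x hx => hx.1.2⟩
  set t₁ := sSup A with ht₁
  have ht₁A : t₁ ∈ A := hAclosed.csSup_mem hAne hAbdd
  obtain ⟨⟨ht₁τ, ht₁t₀⟩, hyt₁⟩ := ht₁A
  have hyt₁' : y t₁ ≤ c := hyt₁
  have ht₁lt : t₁ < t₀ := lt_of_le_of_ne ht₁t₀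
    (fun heq => absurd (heq ▸ hyt₁') (not_le.mpr hcon))
  have hgt : ∀ t ∈ Set.Ioc t₁ t₀, c < y t := by
    intro t ht
    by_contra hle; push_neg at hle
    have hmem : t ∈ A := ⟨⟨le_trans ht₁τ ht.1.le, ht.2⟩, hle⟩
    exact absurd (le_csSup hAbdd hmem) (not_le.mpr ht.1)
  have hIoo : Set.Ioo t₁ t₀ ∈ nhdsWithin t₁ (Set.Ioi t₁) :=
    Ioo_mem_nhdsGT_of_mem ⟨le_refl _, ht₁lt⟩
  have hytc : y t₁ = c := by
    refine le_antisymm hyt₁' ?_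
    have h1 : Tendsto y (nhdsWithin t₁ (Set.Ioi t₁)) (nhds (y t₁)) :=
      ((hy t₁ ht₁τ).continuousAt).continuousWithinAt
    refine ge_of_tendsto h1 ?_
    filter_upwards [hIoo] with t ht
    exact (hgt t ⟨ht.1, ht.2.le⟩).le
  have hd' := hd t₁ ht₁τ hytc
  have hslope : Tendsto (slope y t₁) (nhdsWithin t₁ (Set.Ioi t₁)) (nhds (y' t₁)) :=
    (hasDerivAt_iff_tendsto_slope.mp (hy t₁ ht₁τ)).mono_left
      (nhdsWithin_mono _ (fun x hx => Set.mem_compl_singleton_iff.mpr (ne_of_gt hx)))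
  have hge : 0 ≤ y' t₁ := by
    refine ge_of_tendsto hslope ?_
    filter_upwards [hIoo] with t ht
    have h1 : 0 < t - t₁ := by linarith [ht.1]
    have h2 : 0 ≤ y t - y t₁ := by
      have := hgt t ⟨ht.1, ht.2.le⟩
      linarith [hytc]
    rw [slope_def_field]
    exact div_nonneg h2 h1.le
  linarith

/-- scalar comparison principle behind the separation property. Let
`g : (-1,1) → ℝ` be continuous with `g(s) → +∞` as `s → 1⁻` and `g(s) → -∞` as
`s → -1⁺`, let `α > 0`, `R ≥ 0`, and `δ̄ > 0`. Then there exists `δ ∈ (0,1)`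
(depending only on `g, R, α, δ̄`) such that: for every bounded forcing `h` with
`|h| ≤ R` on `[τ,∞)` and every `C¹` solution `y : [τ,∞) → (-1,1)` of
`α y' + g(y) = h` with `|y(τ)| ≤ 1 - δ̄`, one has `|y(t)| ≤ 1 - δ` for all `t ≥ τ`. -/
theorem ode_comparison_separation
    (g : ℝ → ℝ) (hg : ContinuousOn g (Set.Ioo (-1 : ℝ) 1))
    (hgtop : Tendsto g (nhdsWithin 1 (Set.Iio 1)) atTop)
    (hgbot : Tendsto g (nhdsWithin (-1) (Set.Ioi (-1))) atBot)
    (α R τ δbar : ℝ) (hα : 0 < α) (hR : 0 ≤ R) (hδbar : 0 < δbar) :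
    ∃ δ ∈ Set.Ioo (0 : ℝ) 1,
      ∀ h y y' : ℝ → ℝ,
        (∀ t, τ ≤ t → |h t| ≤ R) →
        (∀ t, τ ≤ t → y t ∈ Set.Ioo (-1 : ℝ) 1) →
        (∀ t, τ ≤ t → HasDerivAt y (y' t) t) →
        (∀ t, τ ≤ t → α * y' t + g (y t) = h t) →
        |y τ| ≤ 1 - δbar →
        ∀ t, τ ≤ t → |y t| ≤ 1 - δ := by
  -- From the divergence at 1⁻: a threshold l < 1 with g > R on (l, 1)
  have h1 : ∀ᶠ s in nhdsWithin 1 (Set.Iio 1), R < g s :=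
    hgtop.eventually (eventually_gt_atTop R)
  obtain ⟨l, hl1, hl⟩ := mem_nhdsLT_iff_exists_Ioo_subset.mp h1
  -- From the divergence at -1⁺: a threshold u > -1 with g < -R on (-1, u)
  have h2 : ∀ᶠ s in nhdsWithin (-1 : ℝ) (Set.Ioi (-1)), g s < -R :=
    hgbot.eventually (eventually_lt_atBot (-R))
  obtain ⟨u, hu1, hu⟩ := mem_nhdsGT_iff_exists_Ioo_subset.mp h2
  have hl1' : l < 1 := hl1
  have hu1' : (-1 : ℝ) < u := hu1
  set δ : ℝ := min (min δbar (1/2)) (min ((1 - l)/2) ((1 + u)/2)) with hδ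
  have hδpos : 0 < δ := by
    apply lt_min
    · exact lt_min hδbar (by norm_num)
    · apply lt_min <;> linarith
  have hδhalf : δ ≤ 1/2 := le_trans (min_le_left _ _) (min_le_right _ _)
  have hδδbar : δ ≤ δbar := le_trans (min_le_left _ _) (min_le_left _ _)
  have hδl : δ < 1 - l := by
    have : δ ≤ (1 - l)/2 := le_trans (min_le_right _ _) (min_le_left _ _)
    linarith
  have hδu : δ < 1 + u := by
    have : δ ≤ (1 + u)/2 := le_trans (min_le_right _ _) (min_le_right _ _)
    linarith
  have hgc : R < g (1 - δ) := hl ⟨by linarith, by linarith⟩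
  have hgc' : g (δ - 1) < -R := hu ⟨by linarith, by linarith⟩
  refine ⟨δ, ⟨hδpos, by linarith⟩, ?_⟩
  intro h y y' hh hrange hy heq hinit
  have hyabs := abs_le.mp hinit
  -- upper barrier
  have hup : ∀ t, τ ≤ t → y t ≤ 1 - δ := by
    refine barrier_lemma τ (1 - δ) y y' hy (by linarith [hyabs.2]) ?_
    intro t ht hyt
    have he := heq t ht
    have hht := abs_le.mp (hh t ht)
    rw [hyt] at he
    have : α * y' t < 0 := by linarith [hht.2]
    nlinarith
  -- lower barrier (apply to -y)
  have hlow : ∀ t, τ ≤ t → -y t ≤ 1 - δ := by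
    refine barrier_lemma τ (1 - δ) (fun t => -y t) (fun t => -y' t)
      (fun t ht => (hy t ht).neg) (by simp; linarith [hyabs.1]) ?_
    intro t ht hyt
    change -y t = 1 - δ at hyt
    have hyt' : y t = δ - 1 := by linarith
    have he := heq t ht
    have hht := abs_le.mp (hh t ht)
    rw [hyt'] at he
    have h3 : 0 < α * y' t := by linarith [hht.1]
    show -y' t < 0
    nlinarith
  intro t ht
  exact abs_le.mpr ⟨by linarith [hlow t ht], hup t ht⟩
end
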